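/- arXiv:1702.01432 — 5 statements merged into one kernel-verified Lean document; each statement's English description precedes it below -/
import Mathlib

section
/- If real numbers k and s, with k ≠ 0, satisfy (ks+1)/(k²+1) = -n/2 and (ks+1)/(s²+1) = -m/2 for some natural numbers n, m, then nm < 4. -/
theorem stmt_0 (k s : ℝ) (hk : k ≠ 0) (n m : ℕ)
    (h1 : (k * s + 1) / (k ^ 2 + 1) = -(n : ℝ) / 2)
    (h2 : (k * s + 1) / (s ^ 2 + 1) = -(m : ℝ) / 2) :
    n * m < 4 := by
  have hk2 : (0:ℝ) < k ^ 2 + 1 := by positivity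
  have hs2 : (0:ℝ) < s ^ 2 + 1 := by positivity
  have e1 : 2 * (k * s + 1) = -(n : ℝ) * (k ^ 2 + 1) := by
    field_simp at h1; linarith
  have e2 : 2 * (k * s + 1) = -(m : ℝ) * (s ^ 2 + 1) := by
    field_simp at h2; linarith
  have hn : (0:ℝ) ≤ (n:ℝ) := Nat.cast_nonneg n
  have hm : (0:ℝ) ≤ (m:ℝ) := Nat.cast_nonneg m
  have hne : k ≠ s := by
    intro h
    subst h
    nlinarith
  have hsq : (0:ℝ) < (k - s) ^ 2 := by have := sub_ne_zero.mpr hne; positivity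
  have hlt : (k * s + 1) ^ 2 < (k ^ 2 + 1) * (s ^ 2 + 1) := by nlinarith
  have key : (n : ℝ) * m < 4 := by
    nlinarith [mul_pos hk2 hs2]
  have : ((n * m : ℕ) : ℝ) < ((4:ℕ):ℝ) := by push_cast; linarith
  exact_mod_cast this
end

section
/- For the pair of unit-direction frequency vectors v₁ = (1,k) and v₂ = (1,s) in ℝ² with k > 0 > s satisfying (ks+1)/(k²+1) ∈ -½ℕ and (ks+1)/(s²+1) ∈ -½ℕ, the angle between v₁ and v₂ lies in {π/2, 2π/3, 3π/4, 5π/6}. -/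
open Real

set_option maxHeartbeats 1000000 in
theorem stmt_2 (k s : ℝ) (hk : 0 < k) (hs : s < 0) (n m : ℕ)
    (h1 : (k * s + 1) / (k ^ 2 + 1) = -(n : ℝ) / 2)
    (h2 : (k * s + 1) / (s ^ 2 + 1) = -(m : ℝ) / 2) :
    Real.arccos ((1 + k * s) / (Real.sqrt (1 + k ^ 2) * Real.sqrt (1 + s ^ 2))) ∈
      ({π / 2, 2 * π / 3, 3 * π / 4, 5 * π / 6} : Set ℝ) := by
  have hA : (0:ℝ) < k ^ 2 + 1 := by positivity
  have hB : (0:ℝ) < s ^ 2 + 1 := by positivity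
  have e1 : k * s + 1 = -(n : ℝ) / 2 * (k ^ 2 + 1) := (div_eq_iff hA.ne').mp h1
  have e2 : k * s + 1 = -(m : ℝ) / 2 * (s ^ 2 + 1) := (div_eq_iff hB.ne').mp h2
  have key : (1 + k * s) ^ 2 = (n : ℝ) * (m : ℝ) / 4 * ((1 + k ^ 2) * (1 + s ^ 2)) := by
    linear_combination (1 + k * s) * e2 - ((m : ℝ) / 2 * (s ^ 2 + 1)) * e1
  set c : ℝ := (1 + k * s) / (Real.sqrt (1 + k ^ 2) * Real.sqrt (1 + s ^ 2)) with hcdef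
  have hsA : Real.sqrt (1 + k ^ 2) ^ 2 = 1 + k ^ 2 := Real.sq_sqrt (by positivity)
  have hsB : Real.sqrt (1 + s ^ 2) ^ 2 = 1 + s ^ 2 := Real.sq_sqrt (by positivity)
  have hABpos : (0:ℝ) < (1 + k ^ 2) * (1 + s ^ 2) := by positivity
  have hsqpos : (0:ℝ) < Real.sqrt (1 + k ^ 2) * Real.sqrt (1 + s ^ 2) := by positivity
  have hc2 : c ^ 2 = (n : ℝ) * (m : ℝ) / 4 := by
    rw [hcdef, div_pow, mul_pow, hsA, hsB, key, mul_div_assoc, div_self hABpos.ne', mul_one]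
  have hks : k ≠ s := by linarith
  have hlt : (1 + k * s) ^ 2 < (1 + k ^ 2) * (1 + s ^ 2) := by nlinarith [pow_pos (show (0:ℝ) < k - s by linarith) 2]
  have hnm4 : (n : ℝ) * (m : ℝ) / 4 < 1 := by nlinarith
  have hnm : n * m ≤ 3 := by
    by_contra h
    push_neg at h
    have h4 : (4:ℕ) ≤ n * m := h
    have : (4:ℝ) ≤ (n : ℝ) * (m : ℝ) := by exact_mod_cast h4
    linarith
  simp only [Set.mem_insert_iff, Set.mem_singleton_iff]
  have hcases : n * m = 0 ∨ n * m = 1 ∨ n * m = 2 ∨ n * m = 3 := by omega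
  -- helper facts for nonzero cases
  have hneg : 1 ≤ n * m → c < 0 := by
    intro hj
    have hn1 : 1 ≤ n := by
      rcases Nat.eq_zero_or_pos n with h | h
      · simp [h] at hj
      · exact h
    have hn1' : (1:ℝ) ≤ (n : ℝ) := by exact_mod_cast hn1
    have hnum : 1 + k * s < 0 := by nlinarith
    exact div_neg_of_neg_of_pos hnum hsqpos
  rcases hcases with hj | hj | hj | hj
  · -- n*m = 0 : c = 0, angle π/2
    left
    have h0 : (1 + k * s) ^ 2 = 0 := by
      rw [key]
      have : (n : ℝ) * (m : ℝ) = 0 := by exact_mod_cast hj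
      rw [this]; ring
    have h0' : 1 + k * s = 0 := by
      exact pow_eq_zero_iff (two_ne_zero) |>.mp h0
    rw [hcdef] at *
    rw [h0', zero_div, Real.arccos_zero]
  · -- n*m = 1 : c = -1/2, angle 2π/3
    right; left
    have hc2' : c ^ 2 = 1 / 4 := by
      rw [hc2]; have : (n : ℝ) * (m : ℝ) = 1 := by exact_mod_cast hj
      rw [this]
    have hcneg := hneg (by omega)
    have hc : c = -(1 / 2) := by
      have h0 : (c + 1 / 2) * (c - 1 / 2) = 0 := by linear_combination hc2'
      rcases mul_eq_zero.mp h0 with h | h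
      · linarith
      · linarith
    rw [hc, show -(1/2 : ℝ) = Real.cos (2 * π / 3) by
      rw [show (2:ℝ) * π / 3 = π - π / 3 by ring, Real.cos_pi_sub, Real.cos_pi_div_three]]
    exact Real.arccos_cos (by positivity) (by linarith [Real.pi_pos])
  · -- n*m = 2 : c = -√2/2, angle 3π/4
    right; right; left
    have hc2' : c ^ 2 = 1 / 2 := by
      rw [hc2]; have : (n : ℝ) * (m : ℝ) = 2 := by exact_mod_cast hj
      rw [this]; norm_num
    have hcneg := hneg (by omega)
    have hs2 : Real.sqrt 2 ^ 2 = 2 := Real.sq_sqrt (by norm_num)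
    have hc : c = -(Real.sqrt 2 / 2) := by
      have h0 : (c + Real.sqrt 2 / 2) * (c - Real.sqrt 2 / 2) = 0 := by
        linear_combination hc2' - (1/4) * hs2
      rcases mul_eq_zero.mp h0 with h | h
      · linarith
      · have := Real.sqrt_nonneg 2; linarith
    rw [hc, show -(Real.sqrt 2 / 2 : ℝ) = Real.cos (3 * π / 4) by
      rw [show (3:ℝ) * π / 4 = π - π / 4 by ring, Real.cos_pi_sub, Real.cos_pi_div_four]]
    exact Real.arccos_cos (by positivity) (by linarith [Real.pi_pos])
  · -- n*m = 3 : c = -√3/2, angle 5π/6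
    right; right; right
    have hc2' : c ^ 2 = 3 / 4 := by
      rw [hc2]; have : (n : ℝ) * (m : ℝ) = 3 := by exact_mod_cast hj
      rw [this]
    have hcneg := hneg (by omega)
    have hs3 : Real.sqrt 3 ^ 2 = 3 := Real.sq_sqrt (by norm_num)
    have hc : c = -(Real.sqrt 3 / 2) := by
      have h0 : (c + Real.sqrt 3 / 2) * (c - Real.sqrt 3 / 2) = 0 := by
        linear_combination hc2' - (1/4) * hs3
      rcases mul_eq_zero.mp h0 with h | h
      · linarith
      · have := Real.sqrt_nonneg 3; linarith
    rw [hc, show -(Real.sqrt 3 / 2 : ℝ) = Real.cos (5 * π / 6) by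
      rw [show (5:ℝ) * π / 6 = π - π / 6 by ring, Real.cos_pi_sub, Real.cos_pi_div_six]]
    exact Real.arccos_cos (by positivity) (by linarith [Real.pi_pos])
end

section
/- If the angle between (1,k) and (1,s) (with k > 0 > s satisfying the integrability conditions (ks+1)/(k²+1) = -n/2, (ks+1)/(s²+1) = -m/2 with n,m ∈ ℕ) equals 2π/3, 3π/4, or 5π/6, then the ratio ‖(1,k)‖/‖(1,s)‖ equals 1, √2 or 1/√2, √3 or 1/√3, respectively. -/
open Real

theorem stmt_3 (k s : ℝ) (hk : 0 < k) (hs : s < 0) (n m : ℕ)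
    (h1 : (k * s + 1) / (k ^ 2 + 1) = -(n : ℝ) / 2)
    (h2 : (k * s + 1) / (s ^ 2 + 1) = -(m : ℝ) / 2)
    (θ r : ℝ)
    (hθ : θ = Real.arccos ((1 + k * s) / (Real.sqrt (1 + k ^ 2) * Real.sqrt (1 + s ^ 2))))
    (hr : r = Real.sqrt (1 + k ^ 2) / Real.sqrt (1 + s ^ 2)) :
    (θ = 2 * π / 3 → r = 1) ∧
    (θ = 3 * π / 4 → r = Real.sqrt 2 ∨ r = 1 / Real.sqrt 2) ∧
    (θ = 5 * π / 6 → r = Real.sqrt 3 ∨ r = 1 / Real.sqrt 3) := by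
  have hk2 : (0:ℝ) < 1 + k ^ 2 := by positivity
  have hs2 : (0:ℝ) < 1 + s ^ 2 := by positivity
  have hA : (0:ℝ) < Real.sqrt (1 + k ^ 2) := Real.sqrt_pos.mpr hk2
  have hB : (0:ℝ) < Real.sqrt (1 + s ^ 2) := Real.sqrt_pos.mpr hs2
  have hA2 : Real.sqrt (1 + k ^ 2) ^ 2 = 1 + k ^ 2 := Real.sq_sqrt hk2.le
  have hB2 : Real.sqrt (1 + s ^ 2) ^ 2 = 1 + s ^ 2 := Real.sq_sqrt hs2.le
  set x : ℝ := (1 + k * s) / (Real.sqrt (1 + k ^ 2) * Real.sqrt (1 + s ^ 2)) with hxdef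
  have hks1 : k * s + 1 = -(n : ℝ) / 2 * (k ^ 2 + 1) := by
    field_simp at h1; linarith
  have hks2 : k * s + 1 = -(m : ℝ) / 2 * (s ^ 2 + 1) := by
    field_simp at h2; linarith
  have hbound : (1 + k * s) ^ 2 ≤ (Real.sqrt (1 + k ^ 2) * Real.sqrt (1 + s ^ 2)) ^ 2 := by
    rw [mul_pow, hA2, hB2]; nlinarith [sq_nonneg (k - s)]
  have hx1 : -1 ≤ x := by
    rw [hxdef, le_div_iff₀ (by positivity)]
    nlinarith [mul_pos hA hB]
  have hx2 : x ≤ 1 := by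
    rw [hxdef, div_le_iff₀ (by positivity)]
    nlinarith [mul_pos hA hB]
  have hcos : Real.cos θ = x := by rw [hθ, Real.cos_arccos hx1 hx2]
  have hxsq : x ^ 2 = (n : ℝ) * m / 4 := by
    rw [hxdef, div_pow, mul_pow, hA2, hB2]
    rw [div_eq_iff (by positivity)]
    have hprod := congrArg₂ (· * ·) hks1 hks2
    linear_combination hprod
  have hr2 : r ^ 2 = (1 + k ^ 2) / (1 + s ^ 2) := by
    rw [hr, div_pow, hA2, hB2]
  have hrpos : 0 ≤ r := by rw [hr]; positivity
  have key : ∀ c : ℝ, (1 + k ^ 2) / (1 + s ^ 2) = c → r = Real.sqrt c := by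
    intro c hc
    rw [← Real.sqrt_sq hrpos, hr2, hc]
  refine ⟨?_, ?_, ?_⟩
  · intro hθv
    have hc : x = -(1/2) := by
      rw [← hcos, hθv]
      have : (2 * π / 3 : ℝ) = π - π / 3 := by ring
      rw [this, Real.cos_pi_sub, Real.cos_pi_div_three]
    have hnm : (n : ℝ) * m = 1 := by rw [hc] at hxsq; linarith
    have hnm' : n * m = 1 := by exact_mod_cast hnm
    have hn1 : n = 1 := Nat.eq_one_of_mul_eq_one_right hnm'
    have hm1 : m = 1 := Nat.eq_one_of_mul_eq_one_left hnm'
    subst hn1 hm1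
    have : (1 + k ^ 2) / (1 + s ^ 2) = 1 := by
      rw [div_eq_one_iff_eq (ne_of_gt hs2)]
      push_cast at hks1 hks2
      linarith
    have := key 1 this
    simpa using this
  · intro hθv
    have hc : x = -(Real.sqrt 2 / 2) := by
      rw [← hcos, hθv]
      have : (3 * π / 4 : ℝ) = π - π / 4 := by ring
      rw [this, Real.cos_pi_sub, Real.cos_pi_div_four]
    have hsq2 : Real.sqrt 2 ^ 2 = 2 := Real.sq_sqrt (by norm_num)
    have hnm : (n : ℝ) * m = 2 := by
      rw [hc] at hxsq
      linear_combination (-4 : ℝ) * hxsq + hsq2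
    have hnm' : n * m = 2 := by exact_mod_cast hnm
    have hn2 : n ≤ 2 := Nat.le_of_dvd (by norm_num) ⟨m, hnm'.symm⟩
    interval_cases n
    · simp at hnm'
    · -- n = 1, m = 2
      have hm2 : m = 2 := by omega
      subst hm2
      left
      apply key
      push_cast at hks1 hks2
      rw [div_eq_iff (ne_of_gt hs2)]
      linarith
    · -- n = 2, m = 1
      have hm1 : m = 1 := by omega
      subst hm1
      right
      rw [one_div, ← Real.sqrt_inv]
      apply key
      push_cast at hks1 hks2
      rw [div_eq_iff (ne_of_gt hs2)]
      rw [inv_mul_eq_div, eq_div_iff (by norm_num)]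
      linarith
  · intro hθv
    have hc : x = -(Real.sqrt 3 / 2) := by
      rw [← hcos, hθv]
      have : (5 * π / 6 : ℝ) = π - π / 6 := by ring
      rw [this, Real.cos_pi_sub, Real.cos_pi_div_six]
    have hsq3 : Real.sqrt 3 ^ 2 = 3 := Real.sq_sqrt (by norm_num)
    have hnm : (n : ℝ) * m = 3 := by
      rw [hc] at hxsq
      linear_combination (-4 : ℝ) * hxsq + hsq3
    have hnm' : n * m = 3 := by exact_mod_cast hnm
    have hn3 : n ≤ 3 := Nat.le_of_dvd (by norm_num) ⟨m, hnm'.symm⟩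
    interval_cases n
    · simp at hnm'
    · -- n = 1, m = 3
      have hm3 : m = 3 := by omega
      subst hm3
      left
      apply key
      push_cast at hks1 hks2
      rw [div_eq_iff (ne_of_gt hs2)]
      linarith
    · omega
    · -- n = 3, m = 1
      have hm1 : m = 1 := by omega
      subst hm1
      right
      rw [one_div, ← Real.sqrt_inv]
      apply key
      push_cast at hks1 hks2
      rw [div_eq_iff (ne_of_gt hs2)]
      rw [inv_mul_eq_div, eq_div_iff (by norm_num)]
      linarith
end

section
/- For the Hamiltonian H = ½(p₁²+p₂²) + e^{q₁} + e^{q₂−q₁} on ℝ⁴, the function I = p₁²p₂² + 2p₂²e^{q₁} − 2p₁p₂e^{q₂−q₁} + 2e^{q₂} + e^{2(q₂−q₁)} satisfies {H, I} = 0. -/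
noncomputable def H₁₀ (q₁ q₂ p₁ p₂ : ℝ) : ℝ :=
  (p₁ ^ 2 + p₂ ^ 2) / 2 + Real.exp q₁ + Real.exp (q₂ - q₁)

noncomputable def I₁₀ (q₁ q₂ p₁ p₂ : ℝ) : ℝ :=
  p₁ ^ 2 * p₂ ^ 2 + 2 * p₂ ^ 2 * Real.exp q₁ - 2 * p₁ * p₂ * Real.exp (q₂ - q₁) +
    2 * Real.exp q₂ + Real.exp (2 * (q₂ - q₁))

/-- Poisson bracket of two functions on ℝ⁴ with coordinates (q₁,q₂,p₁,p₂). -/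
noncomputable def pb4 (F G : ℝ → ℝ → ℝ → ℝ → ℝ) (q₁ q₂ p₁ p₂ : ℝ) : ℝ :=
  (deriv (fun x => F x q₂ p₁ p₂) q₁) * (deriv (fun x => G q₁ q₂ x p₂) p₁) -
  (deriv (fun x => F q₁ q₂ x p₂) p₁) * (deriv (fun x => G x q₂ p₁ p₂) q₁) +
  (deriv (fun x => F q₁ x p₁ p₂) q₂) * (deriv (fun x => G q₁ q₂ p₁ x) p₂) -
  (deriv (fun x => F q₁ q₂ p₁ x) p₂) * (deriv (fun x => G q₁ x p₁ p₂) q₂)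

theorem stmt_10 (q₁ q₂ p₁ p₂ : ℝ) : pb4 H₁₀ I₁₀ q₁ q₂ p₁ p₂ = 0 := by
  have eA : HasDerivAt (fun x : ℝ => Real.exp x) (Real.exp q₁) q₁ := Real.hasDerivAt_exp q₁
  have hB : HasDerivAt (fun x : ℝ => q₂ - x) (-1) q₁ := (hasDerivAt_id q₁).const_sub q₂
  have eB : HasDerivAt (fun x : ℝ => Real.exp (q₂ - x)) (Real.exp (q₂ - q₁) * (-1)) q₁ := hB.exp
  have hC : HasDerivAt (fun x : ℝ => 2 * (q₂ - x)) (2 * (-1)) q₁ := hB.const_mul 2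
  have eC : HasDerivAt (fun x : ℝ => Real.exp (2 * (q₂ - x))) (Real.exp (2 * (q₂ - q₁)) * (2 * (-1))) q₁ := hC.exp
  have hD : HasDerivAt (fun x : ℝ => x - q₁) 1 q₂ := (hasDerivAt_id q₂).sub_const q₁
  have eD : HasDerivAt (fun x : ℝ => Real.exp (x - q₁)) (Real.exp (q₂ - q₁) * 1) q₂ := hD.exp
  have hE : HasDerivAt (fun x : ℝ => 2 * (x - q₁)) (2 * 1) q₂ := hD.const_mul 2
  have eE : HasDerivAt (fun x : ℝ => Real.exp (2 * (x - q₁))) (Real.exp (2 * (q₂ - q₁)) * (2 * 1)) q₂ := hE.exp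
  have eF : HasDerivAt (fun x : ℝ => Real.exp x) (Real.exp q₂) q₂ := Real.hasDerivAt_exp q₂
  -- H partials
  have dHq₁ : HasDerivAt (fun x => H₁₀ x q₂ p₁ p₂) (Real.exp q₁ - Real.exp (q₂ - q₁)) q₁ := by
    unfold H₁₀
    have := ((hasDerivAt_const q₁ ((p₁ ^ 2 + p₂ ^ 2) / 2)).add eA).add eB
    exact this.congr_deriv (by ring)
  have dHq₂ : HasDerivAt (fun x => H₁₀ q₁ x p₁ p₂) (Real.exp (q₂ - q₁)) q₂ := by
    unfold H₁₀
    have := ((hasDerivAt_const q₂ ((p₁ ^ 2 + p₂ ^ 2) / 2 + Real.exp q₁)).add eD)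
    have h2 : (fun x => (p₁ ^ 2 + p₂ ^ 2) / 2 + Real.exp q₁ + Real.exp (x - q₁)) =
        fun x => ((p₁ ^ 2 + p₂ ^ 2) / 2 + Real.exp q₁) + Real.exp (x - q₁) := rfl
    rw [h2]; exact this.congr_deriv (by ring)
  have dHp₁ : HasDerivAt (fun x => H₁₀ q₁ q₂ x p₂) p₁ p₁ := by
    unfold H₁₀
    have h1 : HasDerivAt (fun x : ℝ => x ^ 2) (2 * p₁ ^ 1) p₁ := by
      simpa using hasDerivAt_pow 2 p₁
    have := (((h1.add_const (p₂ ^ 2)).div_const 2).add_const (Real.exp q₁)).add_const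
      (Real.exp (q₂ - q₁))
    exact this.congr_deriv (by ring)
  have dHp₂ : HasDerivAt (fun x => H₁₀ q₁ q₂ p₁ x) p₂ p₂ := by
    unfold H₁₀
    have h1 : HasDerivAt (fun x : ℝ => p₁ ^ 2 + x ^ 2) (2 * p₂ ^ 1) p₂ := by
      simpa using (hasDerivAt_pow 2 p₂).const_add (p₁ ^ 2)
    have := ((h1.div_const 2).add_const (Real.exp q₁)).add_const (Real.exp (q₂ - q₁))
    exact this.congr_deriv (by ring)
  -- I partials
  have dIq₁ : HasDerivAt (fun x => I₁₀ x q₂ p₁ p₂)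
      (2 * p₂ ^ 2 * Real.exp q₁ + 2 * p₁ * p₂ * Real.exp (q₂ - q₁) -
        2 * Real.exp (2 * (q₂ - q₁))) q₁ := by
    unfold I₁₀
    have := ((((hasDerivAt_const q₁ (p₁ ^ 2 * p₂ ^ 2)).add (eA.const_mul (2 * p₂ ^ 2))).sub
      (eB.const_mul (2 * p₁ * p₂))).add_const (2 * Real.exp q₂)).add eC
    exact this.congr_deriv (by ring)
  have dIq₂ : HasDerivAt (fun x => I₁₀ q₁ x p₁ p₂)
      (-(2 * p₁ * p₂) * Real.exp (q₂ - q₁) + 2 * Real.exp q₂ +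
        2 * Real.exp (2 * (q₂ - q₁))) q₂ := by
    unfold I₁₀
    have key := ((((hasDerivAt_const q₂ (p₁ ^ 2 * p₂ ^ 2 + 2 * p₂ ^ 2 * Real.exp q₁)).sub
      (eD.const_mul (2 * p₁ * p₂))).add (eF.const_mul 2)).add eE)
    exact key.congr_deriv (by ring)
  have dIp₁ : HasDerivAt (fun x => I₁₀ q₁ q₂ x p₂)
      (2 * p₁ * p₂ ^ 2 - 2 * p₂ * Real.exp (q₂ - q₁)) p₁ := by
    unfold I₁₀
    have h1 : HasDerivAt (fun x : ℝ => x ^ 2 * p₂ ^ 2) (2 * p₁ ^ 1 * p₂ ^ 2) p₁ := by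
      simpa using (hasDerivAt_pow 2 p₁).mul_const (p₂ ^ 2)
    have h2 : HasDerivAt (fun x : ℝ => 2 * x * p₂ * Real.exp (q₂ - q₁))
        (2 * p₂ * Real.exp (q₂ - q₁)) p₁ := by
      have : HasDerivAt (fun x : ℝ => x * (2 * p₂ * Real.exp (q₂ - q₁)))
          (2 * p₂ * Real.exp (q₂ - q₁)) p₁ := by
        simpa using (hasDerivAt_id p₁).mul_const (2 * p₂ * Real.exp (q₂ - q₁))
      convert this using 1; funext x; ring
    have := (((h1.add_const (2 * p₂ ^ 2 * Real.exp q₁)).sub h2).add_const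
      (2 * Real.exp q₂)).add_const (Real.exp (2 * (q₂ - q₁)))
    exact this.congr_deriv (by ring)
  have dIp₂ : HasDerivAt (fun x => I₁₀ q₁ q₂ p₁ x)
      (2 * p₁ ^ 2 * p₂ + 4 * p₂ * Real.exp q₁ - 2 * p₁ * Real.exp (q₂ - q₁)) p₂ := by
    unfold I₁₀
    have h1 : HasDerivAt (fun x : ℝ => p₁ ^ 2 * x ^ 2) (p₁ ^ 2 * (2 * p₂ ^ 1)) p₂ :=
      (hasDerivAt_pow 2 p₂).const_mul (p₁ ^ 2)
    have h2 : HasDerivAt (fun x : ℝ => 2 * x ^ 2 * Real.exp q₁)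
        (2 * (2 * p₂ ^ 1) * Real.exp q₁) p₂ := by
      have := ((hasDerivAt_pow 2 p₂).const_mul 2).mul_const (Real.exp q₁)
      exact this.congr_deriv (by ring)
    have h3 : HasDerivAt (fun x : ℝ => 2 * p₁ * x * Real.exp (q₂ - q₁))
        (2 * p₁ * Real.exp (q₂ - q₁)) p₂ := by
      have : HasDerivAt (fun x : ℝ => x * (2 * p₁ * Real.exp (q₂ - q₁)))
          (2 * p₁ * Real.exp (q₂ - q₁)) p₂ := by
        simpa using (hasDerivAt_id p₂).mul_const (2 * p₁ * Real.exp (q₂ - q₁))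
      convert this using 1; funext x; ring
    have := (((h1.add h2).sub h3).add_const (2 * Real.exp q₂)).add_const
      (Real.exp (2 * (q₂ - q₁)))
    exact this.congr_deriv (by ring)
  rw [pb4, dHq₁.deriv, dHq₂.deriv, dHp₁.deriv, dHp₂.deriv, dIq₁.deriv, dIq₂.deriv,
    dIp₁.deriv, dIp₂.deriv]
  have h1 : Real.exp (2 * (q₂ - q₁)) = Real.exp (q₂ - q₁) ^ 2 := by
    rw [← Real.exp_nat_mul]; ring_nf
  have h2 : Real.exp q₂ = Real.exp q₁ * Real.exp (q₂ - q₁) := by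
    rw [← Real.exp_add]; ring_nf
  rw [h1, h2]; ring
end

section
/- Let D = Σⱼ λⱼ Xⱼ ∂/∂Xⱼ be the derivation on ℂ[X₁,…,Xₘ] with λ₁,…,λₘ non-resonant (no nonzero integer relation Σ nⱼλⱼ = 0 with (nⱼ) ∈ ℤᵐ∖{0}). Then every irreducible Darboux polynomial of D (i.e. irreducible P with D(P) = cP for some c ∈ ℂ) is a monomial, i.e. one of the variables Xⱼ up to scalar. -/
open MvPolynomial

lemma key_coeff (m : ℕ) (j : Fin m) (P : MvPolynomial (Fin m) ℂ) (d : Fin m →₀ ℕ) :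
    coeff d (X j * pderiv j P) = (d j : ℂ) * coeff d P := by
  induction P using MvPolynomial.induction_on' with
  | monomial s a =>
    rw [pderiv_monomial]
    rw [show (X j : MvPolynomial (Fin m) ℂ) = monomial (Finsupp.single j 1) 1 from rfl,
      monomial_mul, one_mul]
    by_cases h : s j = 0
    · simp only [h, Nat.cast_zero, mul_zero, monomial_zero, coeff_zero, coeff_monomial]
      split_ifs with hs
      · subst hs; simp [h]
      · simp
    · have h1 : 1 ≤ s j := Nat.one_le_iff_ne_zero.mpr h
      have : Finsupp.single j 1 + (s - Finsupp.single j 1) = s := by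
        ext k
        simp only [Finsupp.add_apply, Finsupp.tsub_apply, Finsupp.single_apply]
        by_cases hk : j = k
        · subst hk; simp; omega
        · simp [hk]
      rw [this]
      simp only [coeff_monomial]
      split_ifs with hs
      · subst hs; ring
      · ring
  | add p q hp hq =>
    rw [map_add, mul_add, coeff_add, hp, hq, coeff_add, mul_add]

theorem stmt_14 (m : ℕ) (lam : Fin m → ℂ)
    (hnr : ∀ n : Fin m → ℤ, n ≠ 0 → ∑ j, (n j : ℂ) * lam j ≠ 0)
    (P : MvPolynomial (Fin m) ℂ) (hP : Irreducible P) (c : ℂ)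
    (hD : ∑ j, C (lam j) * X j * pderiv j P = C c * P) :
    ∃ (j : Fin m) (a : ℂ), P = C a * X j := by
  have hw : ∀ d ∈ P.support, ∑ j, lam j * (d j : ℂ) = c := by
    intro d hd
    have h2 : ∑ j, lam j * ((d j : ℂ) * coeff d P) = c * coeff d P := by
      have := congrArg (coeff d) hD
      simpa [coeff_sum, mul_assoc, coeff_C_mul, key_coeff] using this
    have h3 : (∑ j, lam j * (d j : ℂ)) * coeff d P = c * coeff d P := by
      rw [Finset.sum_mul]; simpa [mul_assoc] using h2
    exact mul_right_cancel₀ (mem_support_iff.mp hd) h3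
  have hsub : ∀ d ∈ P.support, ∀ e ∈ P.support, d = e := by
    intro d hd e he
    by_contra hne
    refine hnr (fun j => (d j : ℤ) - e j) ?_ ?_
    · intro h0
      apply hne
      ext k
      have := congrFun h0 k
      simp only [Pi.zero_apply, sub_eq_zero] at this
      exact_mod_cast this
    · have : ∑ j, (((d j : ℤ) - e j : ℤ) : ℂ) * lam j
          = (∑ j, lam j * (d j : ℂ)) - ∑ j, lam j * (e j : ℂ) := by
        rw [← Finset.sum_sub_distrib]
        congr 1; ext j; push_cast; ring
      rw [this, hw d hd, hw e he, sub_self]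
  obtain ⟨d, hd⟩ : P.support.Nonempty := by
    rw [Finset.nonempty_iff_ne_empty, Ne, support_eq_empty]
    exact hP.ne_zero
  set a := coeff d P with ha
  have ha0 : a ≠ 0 := mem_support_iff.mp hd
  have hPm : P = monomial d a := by
    ext e
    rw [coeff_monomial]
    split_ifs with h
    · rw [ha, h]
    · by_contra h0
      exact h (hsub d hd e (mem_support_iff.mpr h0))
  have hd0 : d ≠ 0 := by
    intro h0
    apply hP.not_isUnit
    rw [hPm, h0, monomial_zero']
    exact (isUnit_iff_ne_zero.mpr ha0).map (C : ℂ →+* _)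
  obtain ⟨j, hj⟩ : ∃ j, d j ≠ 0 := by
    by_contra hall
    push_neg at hall
    exact hd0 (Finsupp.ext hall)
  have h1 : 1 ≤ d j := Nat.one_le_iff_ne_zero.mpr hj
  have hfac : P = X j * monomial (d - Finsupp.single j 1) a := by
    rw [hPm, show (X j : MvPolynomial (Fin m) ℂ) = monomial (Finsupp.single j 1) 1 from rfl,
      monomial_mul, one_mul]
    have hsum : Finsupp.single j 1 + (d - Finsupp.single j 1) = d := by
      ext k
      by_cases hk : j = k
      · subst hk; simp [Finsupp.single_apply]; omega
      · simp [Finsupp.single_apply, hk]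
    rw [hsum]
  rcases (hfac ▸ hP).isUnit_or_isUnit rfl with hu | hu
  · exfalso
    have := hu.map (constantCoeff (σ := Fin m) (R := ℂ))
    rw [constantCoeff_X] at this
    exact not_isUnit_zero this
  · have hdd : d - Finsupp.single j 1 = 0 := by
      by_contra hne
      have := hu.map (constantCoeff (σ := Fin m) (R := ℂ))
      rw [constantCoeff_monomial, if_neg hne] at this
      exact not_isUnit_zero this
    have hds : d = Finsupp.single j 1 := by
      ext k
      have h2 := Finsupp.ext_iff.mp hdd k
      simp only [Finsupp.tsub_apply, Finsupp.coe_zero, Pi.zero_apply,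
        Finsupp.single_apply] at h2 ⊢
      by_cases hk : j = k
      · subst hk; simp at h2 ⊢; omega
      · simp [hk] at h2 ⊢; omega
    refine ⟨j, a, ?_⟩
    rw [hPm, hds, show (X j : MvPolynomial (Fin m) ℂ) = monomial (Finsupp.single j 1) 1 from rfl,
      C_mul_monomial, mul_one]
end
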